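/- (Discrete global barriers.) Let d ≥ 1, 0 < λ ≤ Λ, θ ≥ 1, R > 0 and K_f, K_g ≥ 0. Then there exist h₀ > 0 depending only on λ, and constants C₁, C₂, C > 0 depending only on d, λ, θ, R, K_f and K_g, such that the following holds. For every h ∈ (0, h₀), every ε ∈ (0,1), every grid Ω̄_h = Ω_h ∪ ∂Ω_h contained in the closed ball of radius R centred at the origin, every Isaacs data with ellipticity constants (λ,Λ), every f : Ω_h → ℝ with |f| ≤ K_f and every g : ∂Ω_h → ℝ with |g| ≤ K_g, the functions w̄(x) := C₂ − C₁ ‖x − x₀‖² and w̲ := −w̄, where x₀ := (R + √λ)(e₁ + ⋯ + e_d), satisfy: w̲ ≤ g ≤ w̄ on ∂Ω_h; G_h(w̲, x) ≤ 0 ≤ G_h(w̄, x) for every x ∈ Ω̄_h; and |w̄(x)| ≤ C for every x in the closed ball of radius R. In particular the barriers are independent of h and ε. -/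

import Mathlib

open scoped BigOperators
open MeasureTheory
open scoped Classical

noncomputable section

namespace Paper

/-- `ℝᵈ` with the Euclidean structure. -/
abbrev E (d : ℕ) := EuclideanSpace ℝ (Fin d)

/-- The standard basis vector `eᵢ` of `ℝᵈ`. -/
def e (d : ℕ) (i : Fin d) : E d := EuclideanSpace.single i 1

/-- For a symmetric matrix, the maximum of the absolute values of its eigenvalues. -/
def specNorm {d : ℕ} (M : Matrix (Fin d) (Fin d) ℝ) : ℝ :=
  if h : M.IsHermitian then ⨆ i, |h.eigenvalues i| else 0

/-- `(λ,Λ)`-uniform ellipticity of `F : S(d) → ℝ`. -/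
def UniformlyElliptic (d : ℕ) (lam Lam : ℝ) (F : Matrix (Fin d) (Fin d) ℝ → ℝ) : Prop :=
  ∀ M N : Matrix (Fin d) (Fin d) ℝ, M.IsHermitian → N.PosSemidef →
    lam * specNorm N ≤ F M - F (M + N) ∧ F M - F (M + N) ≤ Lam * specNorm N

/-- The upwind discretisation `|D_h u (x)|²`. -/
def upwindSq (d : ℕ) (h : ℝ) (u : E d → ℝ) (x : E d) : ℝ :=
  (1 / h ^ 2) * ∑ i : Fin d,
    max (max (u x - u (x + h • e d i)) (u x - u (x - h • e d i))) 0 ^ 2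

/-- The monotone discretisation `L_h^A u (x)` of `Tr (A D²u)`. -/
def Lh (d : ℕ) (h : ℝ) (A : Matrix (Fin d) (Fin d) ℝ) (u : E d → ℝ) (x : E d) : ℝ :=
  (∑ i : Fin d, (A i i - ∑ j ∈ Finset.univ.erase i, |A i j|) *
      ((u (x + h • e d i) + u (x - h • e d i) - 2 * u x) / h ^ 2)) +
  ∑ i : Fin d, ∑ j ∈ Finset.univ.filter (fun j => i < j),
    (max (A i j) 0 *
        ((u (x + h • (e d i + e d j)) + u (x - h • (e d i + e d j)) - 2 * u x) / h ^ 2) +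
      max (-A i j) 0 *
        ((u (x + h • (e d i - e d j)) + u (x - h • (e d i - e d j)) - 2 * u x) / h ^ 2))

/-- Diagonal dominance of a matrix. -/
def DiagDominant {d : ℕ} (A : Matrix (Fin d) (Fin d) ℝ) : Prop :=
  ∀ i, ∑ j ∈ Finset.univ.erase i, |A i j| ≤ A i i

/-- Isaacs data with ellipticity constants `(λ, Λ)`: symmetric, diagonally dominant matrices
with `λ I ≤ A_{α,β} ≤ Λ I`. -/
def IsaacsData (d : ℕ) {ιA ιB : Type*} (lam Lam : ℝ)
    (A : ιA → ιB → Matrix (Fin d) (Fin d) ℝ) : Prop :=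
  ∀ a b, (A a b).IsHermitian ∧ DiagDominant (A a b) ∧
    (A a b - lam • (1 : Matrix (Fin d) (Fin d) ℝ)).PosSemidef ∧
    (Lam • (1 : Matrix (Fin d) (Fin d) ℝ) - A a b).PosSemidef

/-- Discretised Isaacs operator. -/
def Fh (d : ℕ) {ιA ιB : Type*} (h : ℝ) (A : ιA → ιB → Matrix (Fin d) (Fin d) ℝ)
    (u : E d → ℝ) (x : E d) : ℝ :=
  ⨆ a : ιA, ⨅ b : ιB, -(Lh d h (A a b) u x)

/-- A finite grid `Ω̄_h = Ω_h ∪ ∂Ω_h` whose interior points have all stencil points in the grid. -/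
structure Grid (d : ℕ) (h : ℝ) where
  interior : Finset (E d)
  boundary : Finset (E d)
  disj : Disjoint interior boundary
  nonempty : (interior ∪ boundary).Nonempty
  stencil_ax : ∀ x ∈ interior, ∀ i : Fin d,
    x + h • e d i ∈ interior ∪ boundary ∧ x - h • e d i ∈ interior ∪ boundary
  stencil_diag : ∀ x ∈ interior, ∀ i j : Fin d, i < j →
    x + h • (e d i + e d j) ∈ interior ∪ boundary ∧
    x - h • (e d i + e d j) ∈ interior ∪ boundary ∧
    x + h • (e d i - e d j) ∈ interior ∪ boundary ∧
    x - h • (e d i - e d j) ∈ interior ∪ boundary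

/-- The finite difference scheme `G_h` for the regularised pure degenerate equation. -/
def scheme (d : ℕ) {ιA ιB : Type*} {h : ℝ} (ε θ : ℝ)
    (A : ιA → ιB → Matrix (Fin d) (Fin d) ℝ) (G : Grid d h)
    (f g : E d → ℝ) (u : E d → ℝ) (x : E d) : ℝ :=
  if x ∈ G.interior then
    ε * u x + Fh d h A u x - f x / (ε + upwindSq d h u x) ^ (θ / 2)
  else u x - g x

/-- The finite difference scheme `G_h` for the regularised free transmission problem. -/
def schemeT (d : ℕ) {ιA ιB : Type*} {h : ℝ} (ε : ℝ) (θe : ℝ → ℝ)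
    (A : ιA → ιB → Matrix (Fin d) (Fin d) ℝ) (G : Grid d h)
    (f g : E d → ℝ) (u : E d → ℝ) (x : E d) : ℝ :=
  if x ∈ G.interior then
    ε * u x + Fh d h A u x - f x / (ε + upwindSq d h u x) ^ (θe (u x) / 2)
  else u x - g x

/-- The properties of the regularised degeneracy exponent `θ_ε` used in the transmission scheme. -/
def ThetaInterp (ε θ₁ θ₂ : ℝ) (θe : ℝ → ℝ) : Prop :=
  Monotone θe ∧ (∀ t, θ₁ ≤ θe t ∧ θe t ≤ θ₂) ∧
    (∀ t, t ≤ -ε → θe t = θ₁) ∧ (∀ t, ε ≤ t → θe t = θ₂)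

/-- The Hessian matrix of `φ : ℝᵈ → ℝ` at `x`. -/
def hessianMatrix (d : ℕ) (φ : E d → ℝ) (x : E d) : Matrix (Fin d) (Fin d) ℝ :=
  Matrix.of fun i j => fderiv ℝ (fun y => fderiv ℝ φ y (e d j)) x (e d i)

/-- The piecewise-linear interpolation `Θ_ε` between the degeneracy rates `θ₁` and `θ₂`. -/
def ThetaStep (θ₁ θ₂ ε t : ℝ) : ℝ :=
  if t ≤ -ε then θ₁
  else if t < ε then (θ₂ - θ₁) / (2 * ε) * t + (θ₁ + θ₂) / 2
  else θ₂

/-! Auxiliary lemmas -/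
lemma norm_e (d : ℕ) (i : Fin d) : ‖e d i‖ = 1 := by
  simp [e, EuclideanSpace.norm_single]

lemma inner_e (d : ℕ) (i j : Fin d) :
    (inner ℝ (e d i) (e d j) : ℝ) = if i = j then 1 else 0 := by
  simp only [e, EuclideanSpace.inner_single_left, EuclideanSpace.single_apply]
  by_cases h : i = j <;> simp [h, eq_comm]

lemma sum_e_apply (d : ℕ) (j : Fin d) : (∑ i, e d i) j = 1 := by
  have : (∑ i, e d i) j = ∑ i, (e d i) j := by
    rw [WithLp.ofLp_sum]; exact Finset.sum_apply j Finset.univ (fun i => (e d i).ofLp)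
  rw [this]
  simp [e, EuclideanSpace.single_apply]

lemma coord_inner {d : ℕ} (v : E d) (i : Fin d) : (inner ℝ v (e d i) : ℝ) = v i := by
  rw [real_inner_comm]
  simp [e, EuclideanSpace.inner_single_left]

lemma abs_coord_le {d : ℕ} (v : E d) (i : Fin d) : |v i| ≤ ‖v‖ := by
  rw [show v i = (inner ℝ v (e d i) : ℝ) from (coord_inner v i).symm]
  calc |(inner ℝ v (e d i) : ℝ)| ≤ ‖v‖ * ‖e d i‖ := abs_real_inner_le_norm v (e d i)
    _ = ‖v‖ := by simp [e, EuclideanSpace.norm_single]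

lemma norm_sum_e (d : ℕ) : ‖∑ i, e d i‖ = Real.sqrt d := by
  rw [EuclideanSpace.norm_eq]
  congr 1
  simp [sum_e_apply]

lemma sub_coord {d : ℕ} (x y : E d) (i : Fin d) : (x - y) i = x i - y i := rfl

lemma quad_diff {d : ℕ} (C₁ C₂ : ℝ) (x₀ x v : E d) :
    (C₂ - C₁ * ‖x + v - x₀‖ ^ 2) + (C₂ - C₁ * ‖x - v - x₀‖ ^ 2)
      - 2 * (C₂ - C₁ * ‖x - x₀‖ ^ 2) = -(2 * C₁ * ‖v‖ ^ 2) := by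
  have h1 : x + v - x₀ = (x - x₀) + v := by abel
  have h2 : x - v - x₀ = (x - x₀) - v := by abel
  rw [h1, h2, norm_add_sq_real (x - x₀) v, norm_sub_sq_real (x - x₀) v]
  ring

lemma pair_sum {d : ℕ} (g : Fin d → Fin d → ℝ) :
    ∑ i, ∑ j ∈ Finset.univ.erase i, g i j
      = ∑ i, ∑ j ∈ Finset.univ.filter (fun j => i < j), (g i j + g j i) := by
  have key : ∀ i : Fin d, ∑ j ∈ Finset.univ.erase i, g i j
      = ∑ j, ((if i < j then g i j else 0) + (if j < i then g i j else 0)) := by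
    intro i
    rw [← Finset.sum_erase (f := fun j => (if i < j then g i j else 0) + (if j < i then g i j else 0)) (a := i) Finset.univ (by simp)]
    refine Finset.sum_congr rfl fun j hj => ?_
    rcases lt_or_gt_of_ne (Finset.ne_of_mem_erase hj) with hlt | hgt
    · simp [hlt, not_lt_of_gt hlt]
    · simp [hgt, not_lt_of_gt hgt]
  simp_rw [key, Finset.sum_add_distrib]
  congr 1
  · simp [Finset.sum_filter]
  · rw [Finset.sum_comm]
    simp [Finset.sum_filter]

lemma norm_sq_e_add {d : ℕ} {i j : Fin d} (hij : i ≠ j) : ‖e d i + e d j‖ ^ 2 = 2 := by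
  rw [norm_add_sq_real, norm_e, norm_e, inner_e]
  simp [hij]; norm_num

lemma norm_sq_e_sub {d : ℕ} {i j : Fin d} (hij : i ≠ j) : ‖e d i - e d j‖ ^ 2 = 2 := by
  rw [norm_sub_sq_real, norm_e, norm_e, inner_e]
  simp [hij]; norm_num

lemma Lh_quad {d : ℕ} {h : ℝ} (hh : h ≠ 0) (A : Matrix (Fin d) (Fin d) ℝ)
    (hA : A.IsHermitian) (C₁ C₂ : ℝ) (x₀ x : E d) :
    Lh d h A (fun y => C₂ - C₁ * ‖y - x₀‖ ^ 2) x = -(2 * C₁) * A.trace := by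
  have key : ∀ v : E d,
      ((C₂ - C₁ * ‖x + h • v - x₀‖ ^ 2) + (C₂ - C₁ * ‖x - h • v - x₀‖ ^ 2)
        - 2 * (C₂ - C₁ * ‖x - x₀‖ ^ 2)) / h ^ 2 = -(2 * C₁ * ‖v‖ ^ 2) := by
    intro v
    rw [quad_diff C₁ C₂ x₀ x (h • v), norm_smul]
    simp only [Real.norm_eq_abs, mul_pow, sq_abs]
    field_simp
  have hsym : ∀ i j : Fin d, A j i = A i j := by
    intro i j
    conv_lhs => rw [← hA]
    simp [Matrix.conjTranspose_apply]
  simp only [Lh]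
  have e1 : ∀ i : Fin d,
      ((C₂ - C₁ * ‖x + h • e d i - x₀‖ ^ 2) + (C₂ - C₁ * ‖x - h • e d i - x₀‖ ^ 2)
        - 2 * (C₂ - C₁ * ‖x - x₀‖ ^ 2)) / h ^ 2 = -(2 * C₁) := by
    intro i; rw [key]; rw [show ‖e d i‖ ^ 2 = 1 by rw [norm_e]; norm_num]; ring
  rw [Finset.sum_congr rfl (fun i _ => by rw [e1 i])]
  have e2 : ∀ i : Fin d, ∀ j ∈ Finset.univ.filter (fun j => i < j),
      (max (A i j) 0 *
        (((C₂ - C₁ * ‖x + h • (e d i + e d j) - x₀‖ ^ 2) + (C₂ - C₁ * ‖x - h • (e d i + e d j) - x₀‖ ^ 2)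
          - 2 * (C₂ - C₁ * ‖x - x₀‖ ^ 2)) / h ^ 2) +
       max (-A i j) 0 *
        (((C₂ - C₁ * ‖x + h • (e d i - e d j) - x₀‖ ^ 2) + (C₂ - C₁ * ‖x - h • (e d i - e d j) - x₀‖ ^ 2)
          - 2 * (C₂ - C₁ * ‖x - x₀‖ ^ 2)) / h ^ 2))
      = |A i j| * (-(2 * C₁ * 2)) := by
    intro i j hj
    have hij : i ≠ j := ne_of_lt (Finset.mem_filter.mp hj).2
    rw [key, key, norm_sq_e_add hij, norm_sq_e_sub hij, ← add_mul,
      max_zero_add_max_neg_zero_eq_abs_self]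
  rw [Finset.sum_congr rfl (fun i _ => Finset.sum_congr rfl (fun j hj => e2 i j hj))]
  have hP := pair_sum (fun i j => |A i j|)
  have hP2 : ∑ i, ∑ j ∈ Finset.univ.erase i, |A i j|
      = 2 * ∑ i, ∑ j ∈ Finset.univ.filter (fun j => i < j), |A i j| := by
    rw [hP, Finset.mul_sum]
    exact Finset.sum_congr rfl fun i _ => by
      rw [Finset.mul_sum]
      exact Finset.sum_congr rfl fun j _ => by rw [hsym j i]; ring
  have trA : A.trace = ∑ i, A i i := rfl
  simp only [sub_mul, Finset.sum_sub_distrib, ← Finset.sum_mul, hP2, trA]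
  ring

lemma trace_ge {d : ℕ} {lam : ℝ} {A : Matrix (Fin d) (Fin d) ℝ}
    (hA : (A - lam • (1 : Matrix (Fin d) (Fin d) ℝ)).PosSemidef) :
    lam * d ≤ A.trace := by
  have hd : ∀ i, 0 ≤ (A - lam • (1 : Matrix (Fin d) (Fin d) ℝ)) i i := by
    intro i
    exact hA.diag_nonneg
  have h0 : 0 ≤ (A - lam • (1 : Matrix (Fin d) (Fin d) ℝ)).trace :=
    Finset.sum_nonneg fun i _ => hd i
  rw [Matrix.trace_sub, Matrix.trace_smul, Matrix.trace_one] at h0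
  simp only [smul_eq_mul, Fintype.card_fin] at h0
  linarith

lemma trace_le {d : ℕ} {Lam : ℝ} {A : Matrix (Fin d) (Fin d) ℝ}
    (hA : (Lam • (1 : Matrix (Fin d) (Fin d) ℝ) - A).PosSemidef) :
    A.trace ≤ Lam * d := by
  have hd : ∀ i, 0 ≤ (Lam • (1 : Matrix (Fin d) (Fin d) ℝ) - A) i i := by
    intro i
    exact hA.diag_nonneg
  have h0 : 0 ≤ (Lam • (1 : Matrix (Fin d) (Fin d) ℝ) - A).trace :=
    Finset.sum_nonneg fun i _ => hd i
  rw [Matrix.trace_sub, Matrix.trace_smul, Matrix.trace_one] at h0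
  simp only [smul_eq_mul, Fintype.card_fin] at h0
  linarith

lemma supInf_bounds {ιA ιB : Type} [Nonempty ιA] [Nonempty ιB] (t : ιA → ιB → ℝ) (lo hi : ℝ)
    (h1 : ∀ a b, lo ≤ t a b) (h2 : ∀ a b, t a b ≤ hi) :
    lo ≤ (⨆ a, ⨅ b, t a b) ∧ (⨆ a, ⨅ b, t a b) ≤ hi := by
  have hinf_lo : ∀ a, lo ≤ ⨅ b, t a b := fun a => le_ciInf (h1 a)
  have hinf_hi : ∀ a, (⨅ b, t a b) ≤ hi := fun a =>
    (ciInf_le ⟨lo, fun y hy => by obtain ⟨b, rfl⟩ := hy; exact h1 a b⟩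
      (Classical.arbitrary ιB)).trans (h2 a _)
  constructor
  · exact le_ciSup_of_le ⟨hi, fun y hy => by obtain ⟨a, rfl⟩ := hy; exact hinf_hi a⟩
      (Classical.arbitrary ιA) (hinf_lo _)
  · exact ciSup_le hinf_hi

lemma wdiff_plus {d : ℕ} (C₁ C₂ h : ℝ) (x₀ x : E d) (i : Fin d) :
    (C₂ - C₁ * ‖x - x₀‖ ^ 2) - (C₂ - C₁ * ‖x + h • e d i - x₀‖ ^ 2)
      = C₁ * (2 * h * (x i - x₀ i) + h ^ 2) := by
  have h1 : x + h • e d i - x₀ = (x - x₀) + h • e d i := by abel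
  rw [h1, norm_add_sq_real (x - x₀) (h • e d i), real_inner_smul_right, coord_inner,
    sub_coord, norm_smul]
  simp only [Real.norm_eq_abs, mul_pow, sq_abs, norm_e, one_pow]
  ring

lemma wdiff_minus {d : ℕ} (C₁ C₂ h : ℝ) (x₀ x : E d) (i : Fin d) :
    (C₂ - C₁ * ‖x - x₀‖ ^ 2) - (C₂ - C₁ * ‖x - h • e d i - x₀‖ ^ 2)
      = C₁ * (h ^ 2 - 2 * h * (x i - x₀ i)) := by
  have h1 : x - h • e d i - x₀ = (x - x₀) - h • e d i := by abel
  rw [h1, norm_sub_sq_real (x - x₀) (h • e d i), real_inner_smul_right, coord_inner,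
    sub_coord, norm_smul]
  simp only [Real.norm_eq_abs, mul_pow, sq_abs, norm_e, one_pow]
  ring

lemma upwindSq_ge {d : ℕ} (hd : 1 ≤ d) {h : ℝ} (hh : 0 < h) (u : E d → ℝ) (x : E d)
    {c : ℝ} (hc : 0 ≤ c)
    (hlow : ∀ i : Fin d, c * h ≤
      max (max (u x - u (x + h • e d i)) (u x - u (x - h • e d i))) 0) :
    c ^ 2 ≤ upwindSq d h u x := by
  have i0 : Fin d := ⟨0, hd⟩
  have hterm : (c * h) ^ 2
      ≤ max (max (u x - u (x + h • e d i0)) (u x - u (x - h • e d i0))) 0 ^ 2 :=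
    pow_le_pow_left₀ (by positivity) (hlow i0) 2
  have hsum : (c * h) ^ 2 ≤ ∑ i : Fin d,
      max (max (u x - u (x + h • e d i)) (u x - u (x - h • e d i))) 0 ^ 2 :=
    hterm.trans (Finset.single_le_sum
      (f := fun i => max (max (u x - u (x + h • e d i)) (u x - u (x - h • e d i))) 0 ^ 2)
      (fun i _ => sq_nonneg _) (Finset.mem_univ i0))
  have hup : upwindSq d h u x = (1 / h ^ 2) * ∑ i : Fin d,
      max (max (u x - u (x + h • e d i)) (u x - u (x - h • e d i))) 0 ^ 2 := rfl
  have hch : c ^ 2 = (1 / h ^ 2) * (c * h) ^ 2 := by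
    field_simp
  rw [hup, hch]
  exact mul_le_mul_of_nonneg_left hsum (by positivity)

set_option maxHeartbeats 2000000 in
/-- Discrete global barriers: there are `h₀ > 0` (depending only
on `λ`) and constants `C₁, C₂, C > 0` (depending only on `d, λ, θ, R, K_f, K_g`)
such that `w̄(x) = C₂ − C₁‖x − x₀‖²` (with `x₀ = (R + √λ)(e₁ + ⋯ + e_d)`) and
`w̲ = −w̄` are discrete super- and sub-solutions of the scheme, dominating `g`
on the boundary, and bounded by `C` on the ball of radius `R`, uniformly in `h`
and `ε`. -/
theorem discrete_global_barriers (lam : ℝ) (hlam : 0 < lam) :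
    ∃ h₀ : ℝ, 0 < h₀ ∧
    ∀ (d : ℕ), 1 ≤ d →
    ∀ (θ R Kf Kg : ℝ), 1 ≤ θ → 0 < R → 0 ≤ Kf → 0 ≤ Kg →
    ∃ C₁ C₂ C : ℝ, 0 < C₁ ∧ 0 < C₂ ∧ 0 < C ∧
    ∀ (Lam : ℝ), lam ≤ Lam →
    ∀ (h : ℝ), 0 < h → h < h₀ →
    ∀ (ε : ℝ), 0 < ε → ε < 1 →
    ∀ (G : Grid d h), (∀ x ∈ G.interior ∪ G.boundary, ‖x‖ ≤ R) →
    ∀ (ιA ιB : Type) (_ : Nonempty ιA) (_ : Nonempty ιB)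
      (A : ιA → ιB → Matrix (Fin d) (Fin d) ℝ), IsaacsData d lam Lam A →
    ∀ (f : E d → ℝ), (∀ x ∈ G.interior, |f x| ≤ Kf) →
    ∀ (g : E d → ℝ), (∀ x ∈ G.boundary, |g x| ≤ Kg) →
    let x₀ : E d := (R + Real.sqrt lam) • ∑ i : Fin d, e d i
    let wbar : E d → ℝ := fun y => C₂ - C₁ * ‖y - x₀‖ ^ 2
    (∀ x ∈ G.boundary, -wbar x ≤ g x ∧ g x ≤ wbar x) ∧
    (∀ x ∈ G.interior ∪ G.boundary,
      scheme d ε θ A G f g (fun y => -wbar y) x ≤ 0 ∧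
      0 ≤ scheme d ε θ A G f g wbar x) ∧
    (∀ x : E d, ‖x‖ ≤ R → |wbar x| ≤ C) := by
  have hsl : 0 < Real.sqrt lam := Real.sqrt_pos.mpr hlam
  refine ⟨Real.sqrt lam, hsl, ?_⟩
  intro d hd θ R Kf Kg hθ hR hKf hKg
  set C₁ : ℝ := 1 / Real.sqrt lam + Kf / (2 * lam) + 1 with hC₁def
  have hC₁pos : 0 < C₁ := by positivity
  set M : ℝ := (R + (R + Real.sqrt lam) * Real.sqrt d) ^ 2 with hMdef
  have hM0 : 0 ≤ M := sq_nonneg _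
  set C₂ : ℝ := C₁ * M + Kg + 1 with hC₂def
  have hC₂pos : 0 < C₂ := by positivity
  set v₀ : E d := (R + Real.sqrt lam) • ∑ i, e d i with hv₀def
  have hRsl : 0 < R + Real.sqrt lam := by linarith
  have hv₀j : ∀ j : Fin d, v₀ j = R + Real.sqrt lam := by
    intro j
    have h1 : v₀ j = (R + Real.sqrt lam) * (∑ i, e d i) j := rfl
    rw [h1, sum_e_apply, mul_one]
  have hnormv₀ : ‖v₀‖ = (R + Real.sqrt lam) * Real.sqrt d := by
    rw [hv₀def, norm_smul, norm_sum_e, Real.norm_eq_abs, abs_of_pos hRsl]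
  have hball : ∀ x : E d, ‖x‖ ≤ R → ‖x - v₀‖ ^ 2 ≤ M := by
    intro x hx
    have h1 : ‖x - v₀‖ ≤ R + (R + Real.sqrt lam) * Real.sqrt d := by
      calc ‖x - v₀‖ ≤ ‖x‖ + ‖v₀‖ := norm_sub_le x v₀
        _ ≤ R + (R + Real.sqrt lam) * Real.sqrt d := by rw [hnormv₀]; linarith
    calc ‖x - v₀‖ ^ 2 ≤ (R + (R + Real.sqrt lam) * Real.sqrt d) ^ 2 :=
          pow_le_pow_left₀ (norm_nonneg _) h1 2
      _ = M := by rw [hMdef]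
  have hwlo : ∀ x : E d, ‖x‖ ≤ R → Kg + 1 ≤ C₂ - C₁ * ‖x - v₀‖ ^ 2 := by
    intro x hx
    have h1 := hball x hx
    have h2 : C₁ * ‖x - v₀‖ ^ 2 ≤ C₁ * M := mul_le_mul_of_nonneg_left h1 hC₁pos.le
    rw [hC₂def]; linarith
  have hwhi : ∀ x : E d, C₂ - C₁ * ‖x - v₀‖ ^ 2 ≤ C₂ := by
    intro x; nlinarith [sq_nonneg ‖x - v₀‖, hC₁pos]
  have hcoord : ∀ x : E d, ‖x‖ ≤ R → ∀ i : Fin d, Real.sqrt lam ≤ v₀ i - x i := by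
    intro x hx i
    have h1 : x i ≤ R := ((le_abs_self _).trans (abs_coord_le x i)).trans hx
    rw [hv₀j]; linarith
  have hsq : Real.sqrt lam * Real.sqrt lam = lam := Real.mul_self_sqrt hlam.le
  have hC1s : 1 ≤ C₁ * Real.sqrt lam := by
    rw [hC₁def]
    have h1 : (1 / Real.sqrt lam) * Real.sqrt lam = 1 := by field_simp
    nlinarith [div_nonneg hKf (by linarith : (0:ℝ) ≤ 2 * lam), hsl]
  have hKfC : Kf ≤ 2 * C₁ * lam := by
    rw [hC₁def]
    have h2 : 2 * (1 / Real.sqrt lam + Kf / (2 * lam) + 1) * lam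
        = 2 * lam / Real.sqrt lam + Kf + 2 * lam := by
      field_simp
    rw [h2]
    have h3 : 0 ≤ 2 * lam / Real.sqrt lam := by positivity
    linarith
  refine ⟨C₁, C₂, C₂, hC₁pos, hC₂pos, hC₂pos, ?_⟩
  clear_value C₂ M C₁
  intro Lam hLam h hh0 hh1 ε hε0 hε1 G hGR ιA ιB hιA hιB A hAd f hf g hg
  haveI := hιA; haveI := hιB
  have hdc : (1:ℝ) ≤ (d:ℝ) := by exact_mod_cast hd
  have h2Cd : 2 * C₁ * lam ≤ 2 * C₁ * (lam * (d:ℝ)) := by nlinarith [hC₁pos, hlam]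
  have htr_lo : ∀ a b, lam * (d:ℝ) ≤ (A a b).trace := fun a b => trace_ge (hAd a b).2.2.1
  have htr_hi : ∀ a b, (A a b).trace ≤ Lam * (d:ℝ) := fun a b => trace_le (hAd a b).2.2.2
  have hθ2 : (0:ℝ) ≤ θ / 2 := by linarith
  have hhne : h ≠ 0 := ne_of_gt hh0
  have hhsl : h ≤ Real.sqrt lam := hh1.le
  -- Part 1: boundary domination
  have part1 : ∀ x ∈ G.boundary,
      -(C₂ - C₁ * ‖x - v₀‖ ^ 2) ≤ g x ∧ g x ≤ C₂ - C₁ * ‖x - v₀‖ ^ 2 := by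
    intro x hxb
    have hxR : ‖x‖ ≤ R := hGR x (Finset.mem_union_right _ hxb)
    have h1 := hwlo x hxR
    have h2 := abs_le.mp (hg x hxb)
    constructor <;> linarith [h2.1, h2.2]
  -- Part 3: bound on the ball
  have part3 : ∀ x : E d, ‖x‖ ≤ R → |C₂ - C₁ * ‖x - v₀‖ ^ 2| ≤ C₂ := by
    intro x hx
    have h1 := hwlo x hx
    have h2 := hwhi x
    rw [abs_le]
    constructor <;> linarith [hKg]
  -- Part 2: scheme inequalities
  have part2 : ∀ x ∈ G.interior ∪ G.boundary,
      scheme d ε θ A G f g (fun y => -(C₂ - C₁ * ‖y - v₀‖ ^ 2)) x ≤ 0 ∧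
      0 ≤ scheme d ε θ A G f g (fun y => C₂ - C₁ * ‖y - v₀‖ ^ 2) x := by
    intro x hx
    rcases Finset.mem_union.mp hx with hxi | hxb
    · -- interior point
      have hxR : ‖x‖ ≤ R := hGR x (Finset.mem_union_left _ hxi)
      have hfx := hf x hxi
      -- Fh bounds for the supersolution
      have hLh : ∀ a b, -(Lh d h (A a b) (fun y => C₂ - C₁ * ‖y - v₀‖ ^ 2) x)
          = 2 * C₁ * (A a b).trace := by
        intro a b
        rw [Lh_quad hhne (A a b) (hAd a b).1 C₁ C₂ v₀ x]; ring
      have hb1 : ∀ a b, 2 * C₁ * (lam * (d:ℝ))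
          ≤ -(Lh d h (A a b) (fun y => C₂ - C₁ * ‖y - v₀‖ ^ 2) x) := by
        intro a b; rw [hLh a b]
        have := htr_lo a b; nlinarith [hC₁pos]
      have hb2 : ∀ a b, -(Lh d h (A a b) (fun y => C₂ - C₁ * ‖y - v₀‖ ^ 2) x)
          ≤ 2 * C₁ * (Lam * (d:ℝ)) := by
        intro a b; rw [hLh a b]
        have := htr_hi a b; nlinarith [hC₁pos]
      have hFwb : 2 * C₁ * (lam * (d:ℝ))
          ≤ Fh d h A (fun y => C₂ - C₁ * ‖y - v₀‖ ^ 2) x :=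
        (supInf_bounds _ _ _ hb1 hb2).1
      -- Fh bounds for the subsolution
      have hLhm : ∀ a b, -(Lh d h (A a b) (fun y => -C₂ - -C₁ * ‖y - v₀‖ ^ 2) x)
          = -(2 * C₁ * (A a b).trace) := by
        intro a b
        rw [Lh_quad hhne (A a b) (hAd a b).1 (-C₁) (-C₂) v₀ x]; ring
      have hm1 : ∀ a b, -(2 * C₁ * (Lam * (d:ℝ)))
          ≤ -(Lh d h (A a b) (fun y => -C₂ - -C₁ * ‖y - v₀‖ ^ 2) x) := by
        intro a b; rw [hLhm a b]
        have := htr_hi a b; nlinarith [hC₁pos]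
      have hm2 : ∀ a b, -(Lh d h (A a b) (fun y => -C₂ - -C₁ * ‖y - v₀‖ ^ 2) x)
          ≤ -(2 * C₁ * (lam * (d:ℝ))) := by
        intro a b; rw [hLhm a b]
        have := htr_lo a b; nlinarith [hC₁pos]
      have hFwm : Fh d h A (fun y => -C₂ - -C₁ * ‖y - v₀‖ ^ 2) x
          ≤ -(2 * C₁ * (lam * (d:ℝ))) :=
        (supInf_bounds _ _ _ hm1 hm2).2
      have hfun : (fun y => -(C₂ - C₁ * ‖y - v₀‖ ^ 2))
          = (fun y => -C₂ - -C₁ * ‖y - v₀‖ ^ 2) := funext fun y => by ring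
      -- upwind bounds
      have hcpos : (0:ℝ) ≤ C₁ * Real.sqrt lam := by positivity
      have hup1 : 1 ≤ upwindSq d h (fun y => C₂ - C₁ * ‖y - v₀‖ ^ 2) x := by
        have hge := upwindSq_ge hd hh0 (fun y => C₂ - C₁ * ‖y - v₀‖ ^ 2) x hcpos ?_
        · nlinarith [hge, hC1s, hcpos]
        · intro i
          have hco := hcoord x hxR i
          have key : C₁ * Real.sqrt lam * h ≤
              (C₂ - C₁ * ‖x - v₀‖ ^ 2) - (C₂ - C₁ * ‖x - h • e d i - v₀‖ ^ 2) := by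
            rw [wdiff_minus]
            have hA2 : 2 * h * C₁ * Real.sqrt lam ≤ 2 * h * C₁ * (v₀ i - x i) :=
              mul_le_mul_of_nonneg_left hco (by positivity)
            have hB2 : (0:ℝ) ≤ h * C₁ * Real.sqrt lam := by positivity
            have hB3 : (0:ℝ) ≤ C₁ * h ^ 2 := by positivity
            linarith [hA2, hB2, hB3]
          exact key.trans ((le_max_right _ _).trans (le_max_left _ 0))
      have hup2 : 1 ≤ upwindSq d h (fun y => -(C₂ - C₁ * ‖y - v₀‖ ^ 2)) x := by
        have hge := upwindSq_ge hd hh0 (fun y => -(C₂ - C₁ * ‖y - v₀‖ ^ 2)) x hcpos ?_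
        · nlinarith [hge, hC1s, hcpos]
        · intro i
          have hco := hcoord x hxR i
          have hdp := wdiff_plus C₁ C₂ h v₀ x i
          have key : C₁ * Real.sqrt lam * h ≤
              -(C₂ - C₁ * ‖x - v₀‖ ^ 2) - -(C₂ - C₁ * ‖x + h • e d i - v₀‖ ^ 2) := by
            have h2 : -(C₂ - C₁ * ‖x - v₀‖ ^ 2) - -(C₂ - C₁ * ‖x + h • e d i - v₀‖ ^ 2)
                = -(C₁ * (2 * h * (x i - v₀ i) + h ^ 2)) := by rw [← hdp]; ring
            rw [h2]
            have hA2 : 2 * h * C₁ * Real.sqrt lam ≤ 2 * h * C₁ * (v₀ i - x i) :=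
              mul_le_mul_of_nonneg_left hco (by positivity)
            have hD2 : C₁ * h * h ≤ C₁ * h * Real.sqrt lam :=
              mul_le_mul_of_nonneg_left hhsl (by positivity)
            linarith [hA2, hD2]
          exact key.trans ((le_max_left _ _).trans (le_max_left _ 0))
      -- denominators
      have hT1 : 1 ≤ (ε + upwindSq d h (fun y => C₂ - C₁ * ‖y - v₀‖ ^ 2) x) ^ (θ / 2) :=
        Real.one_le_rpow (by linarith) hθ2
      have hT0 : 0 < (ε + upwindSq d h (fun y => C₂ - C₁ * ‖y - v₀‖ ^ 2) x) ^ (θ / 2) := by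
        linarith
      have hS1 : 1 ≤ (ε + upwindSq d h (fun y => -(C₂ - C₁ * ‖y - v₀‖ ^ 2)) x) ^ (θ / 2) :=
        Real.one_le_rpow (by linarith) hθ2
      have hS0 : 0 < (ε + upwindSq d h (fun y => -(C₂ - C₁ * ‖y - v₀‖ ^ 2)) x) ^ (θ / 2) := by
        linarith
      have habsf := abs_le.mp hfx
      have hdiv1 : f x / (ε + upwindSq d h (fun y => C₂ - C₁ * ‖y - v₀‖ ^ 2) x) ^ (θ / 2)
          ≤ Kf := by
        rw [div_le_iff₀ hT0]
        nlinarith [habsf.2, hT1, hKf]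
      have hdiv2 : -Kf ≤ f x /
          (ε + upwindSq d h (fun y => -(C₂ - C₁ * ‖y - v₀‖ ^ 2)) x) ^ (θ / 2) := by
        rw [le_div_iff₀ hS0]
        nlinarith [habsf.1, hS1, hKf]
      have hwx := hwlo x hxR
      constructor
      · -- subsolution
        simp only [scheme, if_pos hxi]
        have hFm : Fh d h A (fun y => -(C₂ - C₁ * ‖y - v₀‖ ^ 2)) x
            ≤ -(2 * C₁ * (lam * (d:ℝ))) := by rw [hfun]; exact hFwm
        have hεw : ε * -(C₂ - C₁ * ‖x - v₀‖ ^ 2) ≤ 0 := by nlinarith [hε0, hwx, hKg]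
        set S := (ε + upwindSq d h (fun y => -(C₂ - C₁ * ‖y - v₀‖ ^ 2)) x) ^ (θ / 2) with hSdef
        set F2 := Fh d h A (fun y => -(C₂ - C₁ * ‖y - v₀‖ ^ 2)) x with hF2def
        clear_value S F2
        linarith [hFm, hdiv2, hKfC, h2Cd, hεw]
      · -- supersolution
        simp only [scheme, if_pos hxi]
        have hεw : 0 ≤ ε * (C₂ - C₁ * ‖x - v₀‖ ^ 2) := by nlinarith [hε0, hwx, hKg]
        set T := (ε + upwindSq d h (fun y => C₂ - C₁ * ‖y - v₀‖ ^ 2) x) ^ (θ / 2) with hTdef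
        set F1 := Fh d h A (fun y => C₂ - C₁ * ‖y - v₀‖ ^ 2) x with hF1def
        clear_value T F1
        linarith [hFwb, hdiv1, hKfC, h2Cd, hεw]
    · -- boundary point
      have hxni : x ∉ G.interior := fun hxi => (Finset.disjoint_left.mp G.disj hxi) hxb
      have hxR : ‖x‖ ≤ R := hGR x (Finset.mem_union_right _ hxb)
      have h1 := hwlo x hxR
      have h2 := abs_le.mp (hg x hxb)
      constructor
      · simp only [scheme, if_neg hxni]
        linarith [h2.1]
      · simp only [scheme, if_neg hxni]
        linarith [h2.2]
  exact ⟨part1, part2, part3⟩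


end Paper
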